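/- The Newton polytope of the toric Jacobian J^T_f = x₁⋯x_n · det(∂f_i/∂x_j)_{i,j} of n Laurent polynomials f₁,…,f_n in n variables is contained in the Minkowski sum N(f₁) + ⋯ + N(f_n) of their Newton polytopes. -/

import Mathlib

open Finsupp Pointwise

/-- A Laurent polynomial in `n` variables over `K`. -/
abbrev LaurentPoly (K : Type*) [CommRing K] (n : ℕ) := AddMonoidAlgebra K (Fin n → ℤ)

/-- The operator `x_i ∂/∂x_i` on Laurent polynomials. -/
noncomputable def xd {K : Type*} [CommRing K] {n : ℕ} (i : Fin n)
    (f : LaurentPoly K n) : LaurentPoly K n :=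
  AddMonoidAlgebra.ofCoeff (f.coeff.sum fun a c => Finsupp.single a ((a i : ℤ) • c))

/-- The Newton polytope of a Laurent polynomial: the convex hull (in `ℝⁿ`) of its
support. -/
noncomputable def newton {K : Type*} [CommRing K] {n : ℕ} (f : LaurentPoly K n) :
    Set (Fin n → ℝ) :=
  convexHull ℝ ((fun a : Fin n → ℤ => fun i => (a i : ℝ)) '' (f.coeff.support : Set (Fin n → ℤ)))

/-- The toric Jacobian `x₁⋯x_n · det(∂f_i/∂x_j) = det(x_j ∂f_i/∂x_j)` of `n` Laurent
polynomials in `n` variables. -/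
noncomputable def toricJacobian {K : Type*} [CommRing K] {n : ℕ}
    (f : Fin n → LaurentPoly K n) : LaurentPoly K n :=
  Matrix.det (Matrix.of fun i j => xd j (f i))

lemma support_xd {K : Type*} [CommRing K] {n : ℕ} (i : Fin n) (f : LaurentPoly K n) :
    (xd i f).coeff.support ⊆ f.coeff.support := by
  classical
  rw [xd, AddMonoidAlgebra.coeff_ofCoeff]
  refine Finsupp.support_sum.trans ?_
  intro a ha
  simp only [Finset.mem_biUnion] at ha
  obtain ⟨b, hb, hab⟩ := ha
  have := Finsupp.support_single_subset hab
  simp only [Finset.mem_singleton] at this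
  exact this ▸ hb

private def icast {n : ℕ} (a : Fin n → ℤ) : Fin n → ℝ := fun i => (a i : ℝ)

lemma icast_add {n : ℕ} (a b : Fin n → ℤ) : icast (a + b) = icast a + icast b := by
  funext i; simp [icast]

lemma mem_sum_of_support_prod {K : Type*} [CommRing K] {n : ℕ}
    (s : Finset (Fin n)) (g : Fin n → LaurentPoly K n) (S : Fin n → Set (Fin n → ℝ))
    (hS : ∀ i ∈ s, ∀ a ∈ (g i).coeff.support, icast a ∈ S i) :
    ∀ a ∈ (∏ i ∈ s, g i).coeff.support, icast a ∈ ∑ i ∈ s, S i := by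
  classical
  induction s using Finset.cons_induction with
  | empty =>
    intro a ha
    simp only [Finset.prod_empty] at ha
    have h0 : a = 0 := by
      have := Finsupp.support_single_subset
        (show a ∈ (Finsupp.single (0 : Fin n → ℤ) (1 : K)).support from ha)
      simpa using this
    subst h0
    simp only [Finset.sum_empty, Set.mem_zero]
    funext i; simp [icast]
  | cons c s hc ih =>
    intro a ha
    rw [Finset.prod_cons] at ha
    obtain ⟨b, hb, d, hd, rfl⟩ := Finset.mem_add.mp (AddMonoidAlgebra.support_coeff_mul_subset _ _ ha)
    rw [Finset.sum_cons, icast_add]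
    exact Set.add_mem_add (hS c (Finset.mem_cons_self c s) b hb)
      (ih (fun i hi => hS i (Finset.mem_cons_of_mem hi)) d hd)

/-- The Newton polytope of the toric Jacobian of `f₁,…,f_n` is contained in the
Minkowski sum `N(f₁) + ⋯ + N(f_n)` of their Newton polytopes. -/
theorem newton_toricJacobian_subset {K : Type*} [CommRing K] {n : ℕ}
    (f : Fin n → LaurentPoly K n) :
    newton (toricJacobian f) ⊆ ∑ i, newton (f i) := by
  classical
  have key : ∀ a ∈ (toricJacobian f).coeff.support,
      icast a ∈ ∑ i, (icast '' ((f i).coeff.support : Set (Fin n → ℤ))) := by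
    intro a ha
    rw [toricJacobian, Matrix.det_apply, AddMonoidAlgebra.coeff_sum] at ha
    obtain ⟨σ, hσ⟩ := Finsupp.mem_support_finset_sum a ha
    have ha' : a ∈ (∏ i, xd i (f (σ i))).coeff.support :=
      Finsupp.support_smul hσ.2
    have := mem_sum_of_support_prod Finset.univ (fun i => xd i (f (σ i)))
      (fun i => icast '' ((f (σ i)).coeff.support : Set (Fin n → ℤ)))
      (fun i _ b hb => ⟨b, support_xd _ _ hb, rfl⟩) a ha'
    rwa [Equiv.sum_comp σ (fun i => icast '' ((f i).coeff.support : Set (Fin n → ℤ)))] at this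
  have : newton (toricJacobian f) ⊆
      convexHull ℝ (∑ i, (icast '' ((f i).coeff.support : Set (Fin n → ℤ)))) :=
    convexHull_min (fun x hx => by
      obtain ⟨a, ha, rfl⟩ := hx
      exact subset_convexHull ℝ _ (key a ha)) (convex_convexHull ℝ _)
  rw [convexHull_sum] at this
  exact this
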